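/- Fix l, m ≥ 1 and set n = l + m. For each k ∈ {4, 14}: (i) the map θ_{l,m} sends the dynamical Lie algebra 𝔞_k^{K_n} of the complete graph K_n into itself; and (ii) every element g of the dynamical Lie algebra 𝔞_k^{K_{l,m}} of the complete bipartite graph K_{l,m} satisfies θ_{l,m}(g) = g. Consequently 𝔞_k^{K_{l,m}} ⊆ (𝔞_k^{K_n})^{θ_{l,m}}. -/

import Mathlib

open Matrix DirectSum

attribute [local instance 100] LieRing.ofAssociativeRing

noncomputable section

/-- The identity Pauli matrix `I`. -/
def PauliI : Matrix (Fin 2) (Fin 2) ℂ := 1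

/-- The Pauli matrix `X`. -/
def PauliX : Matrix (Fin 2) (Fin 2) ℂ := !![0, 1; 1, 0]

/-- The Pauli matrix `Y`. -/
def PauliY : Matrix (Fin 2) (Fin 2) ℂ := !![0, -Complex.I; Complex.I, 0]

/-- The Pauli matrix `Z`. -/
def PauliZ : Matrix (Fin 2) (Fin 2) ℂ := !![1, 0; 0, -1]

/-- The `n`-fold Kronecker product of the 2×2 matrices `A 0, …, A (n-1)`, realized as a
matrix indexed by `Fin n → Fin 2` (a type of cardinality `2^n`). -/
def pauliString {n : ℕ} (A : Fin n → Matrix (Fin 2) (Fin 2) ℂ) :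
    Matrix (Fin n → Fin 2) (Fin n → Fin 2) ℂ :=
  Matrix.of fun x y => ∏ k, A k (x k) (y k)

/-- The Pauli string `A_i B_j` with `A` at site `i`, `B` at site `j`, and identity elsewhere. -/
def twoLocal {n : ℕ} (A B : Matrix (Fin 2) (Fin 2) ℂ) (i j : Fin n) :
    Matrix (Fin n → Fin 2) (Fin n → Fin 2) ℂ :=
  pauliString (fun k => if k = i then A else if k = j then B else PauliI)

/-- The Pauli string `A_i` with `A` at site `i` and identity elsewhere. -/
def oneLocal {n : ℕ} (A : Matrix (Fin 2) (Fin 2) ℂ) (i : Fin n) :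
    Matrix (Fin n → Fin 2) (Fin n → Fin 2) ℂ :=
  pauliString (fun k => if k = i then A else PauliI)

/-- The generating sets `𝒜_k` (a pair `(a, b)` stands for `a ⊗ b`). -/
def genSet : ℕ → Set (Matrix (Fin 2) (Fin 2) ℂ × Matrix (Fin 2) (Fin 2) ℂ)
  | 2 => {(PauliX, PauliY), (PauliY, PauliX)}
  | 4 => {(PauliX, PauliX), (PauliY, PauliY)}
  | 6 => {(PauliX, PauliX), (PauliY, PauliZ), (PauliZ, PauliY)}
  | 7 => {(PauliX, PauliX), (PauliY, PauliY), (PauliZ, PauliZ)}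
  | 14 => {(PauliX, PauliX), (PauliY, PauliY), (PauliX, PauliY), (PauliY, PauliX)}
  | 16 => {(PauliX, PauliY), (PauliY, PauliX), (PauliY, PauliZ), (PauliZ, PauliY)}
  | 20 => {(PauliX, PauliX), (PauliY, PauliY), (PauliY, PauliZ), (PauliZ, PauliY)}
  | 22 => {(PauliX, PauliX), (PauliX, PauliY), (PauliY, PauliX), (PauliX, PauliZ), (PauliZ, PauliX)}
  | _ => ∅

/-- The dynamical Lie algebra `𝔞_k^G`: the smallest real Lie subalgebra of the `2^n × 2^n`
complex matrices containing `i·(a_i · b_j)` for every edge `{i, j}` of `G` and every pair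
`(a, b)` with `a ⊗ b ∈ 𝒜_k`. -/
def dla (k : ℕ) {n : ℕ} (G : SimpleGraph (Fin n)) :
    LieSubalgebra ℝ (Matrix (Fin n → Fin 2) (Fin n → Fin 2) ℂ) :=
  LieSubalgebra.lieSpan ℝ _
    {M | ∃ i j : Fin n, G.Adj i j ∧ ∃ p ∈ genSet k, M = Complex.I • twoLocal p.1 p.2 i j}

lemma pauliString_mul {n : ℕ} (A B : Fin n → Matrix (Fin 2) (Fin 2) ℂ) :
    pauliString A * pauliString B = pauliString (fun k => A k * B k) := by
  ext x y
  simp only [pauliString, Matrix.mul_apply, Matrix.of_apply, ← Finset.prod_mul_distrib]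
  rw [Fintype.prod_sum (fun k t => A k (x k) t * B k t (y k))]

lemma pauliString_one {n : ℕ} :
    pauliString (fun _ : Fin n => (1 : Matrix (Fin 2) (Fin 2) ℂ)) = 1 := by
  ext x y
  simp only [pauliString, Matrix.of_apply, Matrix.one_apply]
  by_cases h : x = y
  · subst h; simp
  · rw [if_neg h]
    obtain ⟨k, hk⟩ := Function.ne_iff.mp h
    exact Finset.prod_eq_zero (Finset.mem_univ k) (if_neg hk)

lemma PauliX_mul_self : PauliX * PauliX = 1 := by
  ext i j
  fin_cases i <;> fin_cases j <;>
    simp [PauliX, Matrix.mul_apply, Fin.sum_univ_two, Matrix.one_apply]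

lemma PauliY_mul_self : PauliY * PauliY = 1 := by
  ext i j
  fin_cases i <;> fin_cases j <;>
    simp [PauliY, Matrix.mul_apply, Fin.sum_univ_two, Matrix.one_apply]

/-- The Pauli string `Q_{l,m} = Y^{⊗l} ⊗ X^{⊗m}` on `l + m` qubits. -/
def Qlm (l m : ℕ) : Matrix (Fin (l + m) → Fin 2) (Fin (l + m) → Fin 2) ℂ :=
  pauliString (fun i => if (i : ℕ) < l then PauliY else PauliX)

lemma Qlm_mul_self (l m : ℕ) : Qlm l m * Qlm l m = 1 := by
  rw [Qlm, pauliString_mul]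
  rw [show (fun k : Fin (l + m) => (if (k : ℕ) < l then PauliY else PauliX) *
      (if (k : ℕ) < l then PauliY else PauliX)) = fun _ => (1 : Matrix (Fin 2) (Fin 2) ℂ) from ?_,
    pauliString_one]
  funext k
  by_cases h : (k : ℕ) < l
  · simp [h, PauliY_mul_self]
  · simp [h, PauliX_mul_self]

/-- The involution `θ_{l,m}(g) = -Q_{l,m} · gᵀ · Q_{l,m}`. -/
def pauliTheta (l m : ℕ) (g : Matrix (Fin (l + m) → Fin 2) (Fin (l + m) → Fin 2) ℂ) :
    Matrix (Fin (l + m) → Fin 2) (Fin (l + m) → Fin 2) ℂ :=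
  -(Qlm l m * gᵀ * Qlm l m)

lemma pauliTheta_add (l m : ℕ) (a b : Matrix (Fin (l + m) → Fin 2) (Fin (l + m) → Fin 2) ℂ) :
    pauliTheta l m (a + b) = pauliTheta l m a + pauliTheta l m b := by
  simp only [pauliTheta, transpose_add, mul_add, add_mul, neg_add]

lemma pauliTheta_smul (l m : ℕ) (r : ℝ)
    (a : Matrix (Fin (l + m) → Fin 2) (Fin (l + m) → Fin 2) ℂ) :
    pauliTheta l m (r • a) = r • pauliTheta l m a := by
  simp [pauliTheta, transpose_smul, mul_smul_comm, smul_mul_assoc]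

lemma Qlm_sandwich (l m : ℕ) (x y : Matrix (Fin (l + m) → Fin 2) (Fin (l + m) → Fin 2) ℂ) :
    (Qlm l m * x * Qlm l m) * (Qlm l m * y * Qlm l m) = Qlm l m * (x * y) * Qlm l m := by
  have hQ := Qlm_mul_self l m
  calc (Qlm l m * x * Qlm l m) * (Qlm l m * y * Qlm l m)
      = Qlm l m * x * ((Qlm l m * Qlm l m) * (y * Qlm l m)) := by
        simp only [mul_assoc]
    _ = Qlm l m * (x * y) * Qlm l m := by
        rw [hQ, one_mul]; simp only [mul_assoc]

lemma pauliTheta_lie (l m : ℕ) (a b : Matrix (Fin (l + m) → Fin 2) (Fin (l + m) → Fin 2) ℂ) :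
    pauliTheta l m ⁅a, b⁆ = ⁅pauliTheta l m a, pauliTheta l m b⁆ := by
  simp only [pauliTheta, Ring.lie_def, transpose_sub, transpose_mul, neg_mul_neg,
    mul_sub, sub_mul, neg_sub]
  rw [Qlm_sandwich, Qlm_sandwich]

/-- The complete bipartite graph `K_{l,m}` on `{1, …, l + m}`, with parts `{1, …, l}` and
`{l + 1, …, l + m}`. -/
def Kbip (l m : ℕ) : SimpleGraph (Fin (l + m)) :=
  SimpleGraph.fromRel (fun i j => (i : ℕ) < l ∧ l ≤ (j : ℕ))

lemma pauliString_transpose {n : ℕ} (A : Fin n → Matrix (Fin 2) (Fin 2) ℂ) :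
    (pauliString A)ᵀ = pauliString (fun k => (A k)ᵀ) := by
  ext x y
  simp [pauliString, Matrix.transpose_apply]

lemma pauliString_smul {n : ℕ} (c : Fin n → ℂ) (A : Fin n → Matrix (Fin 2) (Fin 2) ℂ) :
    pauliString (fun k => c k • A k) = (∏ k, c k) • pauliString A := by
  ext x y
  simp [pauliString, Matrix.smul_apply, smul_eq_mul, Finset.prod_mul_distrib]

lemma PauliX_transpose : PauliXᵀ = PauliX := by
  ext i j; fin_cases i <;> fin_cases j <;> simp [PauliX, Matrix.transpose_apply]

lemma PauliY_transpose : PauliYᵀ = -PauliY := by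
  ext i j; fin_cases i <;> fin_cases j <;> simp [PauliY, Matrix.transpose_apply]

lemma YXY : PauliY * PauliX * PauliY = -PauliX := by
  ext i j
  fin_cases i <;> fin_cases j <;>
    simp [PauliX, PauliY, Matrix.mul_apply, Fin.sum_univ_two, Complex.I_mul_I]

lemma XYX : PauliX * PauliY * PauliX = -PauliY := by
  ext i j
  fin_cases i <;> fin_cases j <;>
    simp [PauliX, PauliY, Matrix.mul_apply, Fin.sum_univ_two]

lemma conjY (c : Matrix (Fin 2) (Fin 2) ℂ) (hc : c = PauliX ∨ c = PauliY) :
    PauliY * cᵀ * PauliY = (-1 : ℂ) • c := by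
  rcases hc with rfl | rfl
  · rw [PauliX_transpose, YXY]; simp
  · simp [PauliY_transpose, mul_neg, neg_mul, PauliY_mul_self]

lemma conjX (c : Matrix (Fin 2) (Fin 2) ℂ) (hc : c = PauliX ∨ c = PauliY) :
    PauliX * cᵀ * PauliX = (1 : ℂ) • c := by
  rcases hc with rfl | rfl
  · simp [PauliX_transpose, PauliX_mul_self]
  · simp [PauliY_transpose, mul_neg, neg_mul, XYX]

lemma conjY_one : PauliY * (PauliI)ᵀ * PauliY = (1 : ℂ) • PauliI := by
  simp [PauliI, PauliY_mul_self]

lemma conjX_one : PauliX * (PauliI)ᵀ * PauliX = (1 : ℂ) • PauliI := by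
  simp [PauliI, PauliX_mul_self]

lemma theta_gen (l m : ℕ) (a b : Matrix (Fin 2) (Fin 2) ℂ)
    (ha : a = PauliX ∨ a = PauliY) (hb : b = PauliX ∨ b = PauliY)
    (p q : Fin (l + m)) (hpq : p ≠ q) :
    pauliTheta l m (Complex.I • twoLocal a b p q) =
      (-((if (p : ℕ) < l then (-1 : ℂ) else 1) * (if (q : ℕ) < l then (-1 : ℂ) else 1))) •
        (Complex.I • twoLocal a b p q) := by
  set c : Fin (l + m) → ℂ :=
    fun k => if k = p ∨ k = q then (if (k : ℕ) < l then -1 else 1) else 1 with hc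
  have key : Qlm l m * (twoLocal a b p q)ᵀ * Qlm l m = (∏ k, c k) • twoLocal a b p q := by
    rw [twoLocal, pauliString_transpose, Qlm, pauliString_mul, pauliString_mul,
      ← pauliString_smul]
    refine congrArg pauliString (funext fun k => ?_)
    by_cases hkp : k = p
    · by_cases hkl : (p : ℕ) < l <;>
        simp [hc, hkp, hkl, conjY a ha, conjX a ha]
    · by_cases hkq : k = q
      · by_cases hkl : (q : ℕ) < l <;>
          simp [hc, hkq, hkl, hkp, Ne.symm hpq, conjY b hb, conjX b hb]
      · by_cases hkl : (k : ℕ) < l <;>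
          simp [hc, hkl, hkp, hkq, conjY_one, conjX_one]
  have hprod : (∏ k, c k) =
      (if (p : ℕ) < l then (-1 : ℂ) else 1) * (if (q : ℕ) < l then (-1 : ℂ) else 1) := by
    rw [← Finset.prod_subset (Finset.subset_univ ({p, q} : Finset (Fin (l + m))))
      (fun x _ hx => by
        simp only [Finset.mem_insert, Finset.mem_singleton, not_or] at hx
        simp [hc, hx.1, hx.2])]
    rw [Finset.prod_pair hpq]
    simp [hc]
  rw [pauliTheta, Matrix.transpose_smul, Matrix.mul_smul, Matrix.smul_mul, key, hprod,
    smul_smul, smul_smul, ← neg_smul]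
  congr 1
  ring

lemma genSet_mem_XY (k : ℕ) (hk : k ∈ ({4, 14} : Set ℕ))
    (p : Matrix (Fin 2) (Fin 2) ℂ × Matrix (Fin 2) (Fin 2) ℂ) (hp : p ∈ genSet k) :
    (p.1 = PauliX ∨ p.1 = PauliY) ∧ (p.2 = PauliX ∨ p.2 = PauliY) := by
  simp only [Set.mem_insert_iff, Set.mem_singleton_iff] at hk
  rcases hk with rfl | rfl <;>
    · simp only [genSet, Set.mem_insert_iff, Set.mem_singleton_iff] at hp
      rcases hp with rfl | hp <;> try rcases hp with rfl | hp
      all_goals first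
        | (try rcases hp with rfl | rfl) <;> simp <;> tauto
        | simp <;> tauto

def pauliThetaHom (l m : ℕ) :
    Matrix (Fin (l + m) → Fin 2) (Fin (l + m) → Fin 2) ℂ →ₗ⁅ℝ⁆
      Matrix (Fin (l + m) → Fin 2) (Fin (l + m) → Fin 2) ℂ where
  toFun := pauliTheta l m
  map_add' := pauliTheta_add l m
  map_smul' := pauliTheta_smul l m
  map_lie' := by intro a b; exact pauliTheta_lie l m a b

def pauliFixed (l m : ℕ) :
    LieSubalgebra ℝ (Matrix (Fin (l + m) → Fin 2) (Fin (l + m) → Fin 2) ℂ) where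
  carrier := {g | pauliTheta l m g = g}
  add_mem' := by
    intro a b ha hb
    simp only [Set.mem_setOf_eq] at *
    rw [pauliTheta_add, ha, hb]
  zero_mem' := by
    simp only [Set.mem_setOf_eq, pauliTheta]
    simp
  smul_mem' := by
    intro r a ha
    simp only [Set.mem_setOf_eq] at *
    rw [pauliTheta_smul, ha]
  lie_mem' := by
    intro a b ha hb
    simp only [Set.mem_setOf_eq] at *
    rw [pauliTheta_lie, ha, hb]

lemma mem_pauliFixed {l m : ℕ} (g : Matrix (Fin (l + m) → Fin 2) (Fin (l + m) → Fin 2) ℂ) :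
    g ∈ pauliFixed l m ↔ pauliTheta l m g = g := Iff.rfl

/-- For `k ∈ {4, 14}`: the involution `θ_{l,m}` maps `𝔞_k^{K_n}` into
itself; every element of `𝔞_k^{K_{l,m}}` is fixed by `θ_{l,m}`; consequently
`𝔞_k^{K_{l,m}} ⊆ (𝔞_k^{K_n})^{θ_{l,m}}`. -/
theorem dla_Kbip_subset_fixed (l m : ℕ) (hl : 1 ≤ l) (hm : 1 ≤ m)
    (k : ℕ) (hk : k ∈ ({4, 14} : Set ℕ)) :
    (∀ g ∈ dla k (⊤ : SimpleGraph (Fin (l + m))),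
        pauliTheta l m g ∈ dla k (⊤ : SimpleGraph (Fin (l + m)))) ∧
    (∀ g ∈ dla k (Kbip l m), pauliTheta l m g = g) ∧
    (∀ g ∈ dla k (Kbip l m),
        g ∈ dla k (⊤ : SimpleGraph (Fin (l + m))) ∧ pauliTheta l m g = g) := by
  have hmono : dla k (Kbip l m) ≤ dla k (⊤ : SimpleGraph (Fin (l + m))) := by
    rw [dla, LieSubalgebra.lieSpan_le]
    rintro M ⟨i, j, hij, pr, hpr, rfl⟩
    exact LieSubalgebra.subset_lieSpan
      ⟨i, j, by simpa using hij.ne, pr, hpr, rfl⟩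
  have hinv : ∀ g ∈ dla k (⊤ : SimpleGraph (Fin (l + m))),
      pauliTheta l m g ∈ dla k (⊤ : SimpleGraph (Fin (l + m))) := by
    have hle : dla k (⊤ : SimpleGraph (Fin (l + m))) ≤
        (dla k (⊤ : SimpleGraph (Fin (l + m)))).comap (pauliThetaHom l m) := by
      rw [dla, LieSubalgebra.lieSpan_le]
      rintro M ⟨i, j, hij, pr, hpr, rfl⟩
      obtain ⟨h1, h2⟩ := genSet_mem_XY k hk pr hpr
      have hij' : i ≠ j := hij.ne
      have hM : Complex.I • twoLocal pr.1 pr.2 i j ∈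
          dla k (⊤ : SimpleGraph (Fin (l + m))) :=
        LieSubalgebra.subset_lieSpan ⟨i, j, hij, pr, hpr, rfl⟩
      show pauliThetaHom l m _ ∈ dla k (⊤ : SimpleGraph (Fin (l + m)))
      show pauliTheta l m _ ∈ dla k (⊤ : SimpleGraph (Fin (l + m)))
      rw [theta_gen l m pr.1 pr.2 h1 h2 i j hij']
      have hs : (-((if (i : ℕ) < l then (-1 : ℂ) else 1) *
          (if (j : ℕ) < l then (-1 : ℂ) else 1))) = 1 ∨
          (-((if (i : ℕ) < l then (-1 : ℂ) else 1) *
          (if (j : ℕ) < l then (-1 : ℂ) else 1))) = -1 := by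
        split_ifs <;> norm_num
      rcases hs with h | h <;> rw [h]
      · rw [one_smul]; exact hM
      · rw [neg_one_smul]; exact neg_mem hM
    intro g hg
    exact hle hg
  have hfix : ∀ g ∈ dla k (Kbip l m), pauliTheta l m g = g := by
    have hle : dla k (Kbip l m) ≤ pauliFixed l m := by
      rw [dla, LieSubalgebra.lieSpan_le]
      rintro M ⟨i, j, hij, pr, hpr, rfl⟩
      obtain ⟨h1, h2⟩ := genSet_mem_XY k hk pr hpr
      have hij' : i ≠ j := hij.ne
      have hadj : ((i : ℕ) < l ∧ l ≤ (j : ℕ)) ∨ ((j : ℕ) < l ∧ l ≤ (i : ℕ)) := by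
        have := hij
        rw [Kbip, SimpleGraph.fromRel_adj] at this
        exact this.2
      show pauliTheta l m _ = _
      rw [theta_gen l m pr.1 pr.2 h1 h2 i j hij']
      rcases hadj with ⟨h3, h4⟩ | ⟨h3, h4⟩
      · rw [if_pos h3, if_neg (not_lt.mpr h4)]
        norm_num
      · rw [if_neg (not_lt.mpr h4), if_pos h3]
        norm_num
    intro g hg
    exact hle hg
  exact ⟨hinv, hfix, fun g hg => ⟨hmono hg, hfix g hg⟩⟩
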